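/- The FD contraction rule is sound for K-relations over any nontrivial positive and multiplicatively cancellative commutative semiring K: for every K-relation R over a finite schema V with finite nonempty domains and pairwise disjoint X, Y, Z ⊆ V, if R satisfies the conditional independence CI(X; Y, Z) and the functional dependency X∪Y → Z, then R satisfies the functional dependency X → Z. -/
import Mathlib


/-! # Preliminaries: K-relations over semirings -/

open Finset

variable {V : Type*}

/-- A tuple over the finite set `X` of variables: it assigns to each variable
`a ∈ X` a value in its domain `Dom a`. -/
abbrev Tup (Dom : V → Type*) (X : Finset V) : Type _ :=
  ∀ a : X, Dom a

/-- Restriction `t[Y]` of a tuple `t` over `X` to a subset `Y ⊆ X`. -/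
def Tup.restrict {Dom : V → Type*} {X Y : Finset V} (h : Y ⊆ X) (t : Tup Dom X) :
    Tup Dom Y :=
  fun a => t ⟨a.1, h a.2⟩

open Classical in
/-- The marginal of a `K`-relation `R` over a schema `X` on a subset `Y ⊆ X`,
evaluated at a tuple `u` over `Y`: the sum of `R t` over all tuples `t` over `X`
with `t[Y] = u`. -/
noncomputable def margin {K : Type*} [CommSemiring K] [DecidableEq V]
    {Dom : V → Type*} [∀ a, Fintype (Dom a)] {X Y : Finset V}
    (R : Tup Dom X → K) (h : Y ⊆ X) (u : Tup Dom Y) : K :=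
  ∑ t : Tup Dom X, if Tup.restrict h t = u then R t else 0

open Classical in
/-- `c_S(u)`: the product of the marginal `S[Z]` over all tuples `v` in the
support of `S[Z]` different from `u` (empty products are `1`). -/
noncomputable def cfun {K : Type*} [CommSemiring K] [DecidableEq V]
    {Dom : V → Type*} [∀ a, Fintype (Dom a)] {Y Z : Finset V}
    (S : Tup Dom Y → K) (h : Z ⊆ Y) (u : Tup Dom Z) : K :=
  ∏ v : Tup Dom Z, if margin S h v ≠ 0 ∧ v ≠ u then margin S h v else 1

/-- The join `R ⋈ S` of a `K`-relation `R` over `X` and a `K`-relation `S` over `Y`,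
realized on the schema `T = X ∪ Y`:
`(R ⋈ S)(t) = R(t[X]) ⬝ S(t[Y]) ⬝ c_S(t[X ∩ Y])`. -/
noncomputable def joinOn {K : Type*} [CommSemiring K] [DecidableEq V]
    {Dom : V → Type*} [∀ a, Fintype (Dom a)] {X Y T : Finset V}
    (R : Tup Dom X → K) (S : Tup Dom Y → K)
    (hX : X ⊆ T) (hY : Y ⊆ T) (_hT : T ⊆ X ∪ Y) : Tup Dom T → K :=
  fun t =>
    R (Tup.restrict hX t) * S (Tup.restrict hY t) *
      cfun (Z := X ∩ Y) S Finset.inter_subset_right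
        (Tup.restrict ((Finset.inter_subset_right (s₁ := X)).trans hY) t)

/-- A `K`-relation `R` over the schema `S` satisfies the conditional independence
`CI(X; Y, Z)` (for `X, Y, Z ⊆ S`) if for every tuple `t` over `X ∪ Y ∪ Z`,
`R(t[X∪Y]) ⬝ R(t[X∪Z]) = R(t[X∪Y∪Z]) ⬝ R(t[X])`, all values being marginals of `R`. -/
def satCI {K : Type*} [CommSemiring K] [DecidableEq V]
    {Dom : V → Type*} [∀ a, Fintype (Dom a)] {S X Y Z : Finset V}
    (R : Tup Dom S → K) (hX : X ⊆ S) (hY : Y ⊆ S) (hZ : Z ⊆ S) : Prop :=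
  ∀ t : Tup Dom (X ∪ Y ∪ Z),
    margin R (Finset.union_subset hX hY) (Tup.restrict Finset.subset_union_left t) *
      margin R (Finset.union_subset hX hZ)
        (Tup.restrict (Finset.union_subset
          (Finset.subset_union_left.trans Finset.subset_union_left)
          Finset.subset_union_right) t) =
    margin R (Finset.union_subset (Finset.union_subset hX hY) hZ) t *
      margin R hX
        (Tup.restrict (Finset.subset_union_left.trans Finset.subset_union_left) t)

/-- A `K`-relation `R` over the schema `S` satisfies the functional dependency
`U → W` if any two tuples in the support of `R` agreeing on `U` agree on `W`. -/
def satFD {K : Type*} [Zero K] {Dom : V → Type*} {S U W : Finset V}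
    (R : Tup Dom S → K) (hU : U ⊆ S) (hW : W ⊆ S) : Prop :=
  ∀ t t' : Tup Dom S, R t ≠ 0 → R t' ≠ 0 →
    Tup.restrict hU t = Tup.restrict hU t' → Tup.restrict hW t = Tup.restrict hW t'

/-- Two `K`-relations over the same schema are equivalent (up to normalization),
`R ≡ R'`, if `aR = bR'` for some nonzero `a, b ∈ K`. -/
def equivRel {K : Type*} [CommSemiring K] {Dom : V → Type*} {X : Finset V}
    (R R' : Tup Dom X → K) : Prop :=
  ∃ a b : K, a ≠ 0 ∧ b ≠ 0 ∧ ∀ t, a * R t = b * R' t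

/-- `K` is `⊕`-positive: `a + b = 0` implies `a = b = 0`. -/
def plusPos (K : Type*) [CommSemiring K] : Prop :=
  ∀ a b : K, a + b = 0 → a = 0 ∧ b = 0

/-- `K` has no divisors of zero. -/
def noZD (K : Type*) [CommSemiring K] : Prop :=
  ∀ a b : K, a * b = 0 → a = 0 ∨ b = 0

/-- `K` is positive: `⊕`-positive and without zero divisors. -/
def posSemiring (K : Type*) [CommSemiring K] : Prop :=
  plusPos K ∧ noZD K

/-- `K` is multiplicatively cancellative. -/
def mulCanc (K : Type*) [CommSemiring K] : Prop :=
  ∀ a b c : K, a ≠ 0 → a * b = a * c → b = c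

/-- `K` is additively cancellative. -/
def addCanc (K : Type*) [CommSemiring K] : Prop :=
  ∀ a b c : K, a + b = a + c → b = c

/-- `K` is naturally totally ordered: the preorder `a ≤ b ↔ ∃ c, a + c = b`
is antisymmetric and total. -/
def natTotOrd (K : Type*) [CommSemiring K] : Prop :=
  (∀ a b : K, (∃ c, a + c = b) → (∃ c, b + c = a) → a = b) ∧
    (∀ a b : K, (∃ c, a + c = b) ∨ (∃ c, b + c = a))

/-- `K` is a semifield: every nonzero element has a multiplicative inverse. -/
def isSemifield (K : Type*) [CommSemiring K] : Prop :=
  ∀ a : K, a ≠ 0 → ∃ b, a * b = 1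

theorem subL [DecidableEq V] {X Y Z : Finset V} : X ⊆ X ∪ Y ∪ Z :=
  Finset.subset_union_left.trans Finset.subset_union_left

theorem subM [DecidableEq V] {X Y Z : Finset V} : Y ⊆ X ∪ Y ∪ Z :=
  Finset.subset_union_right.trans Finset.subset_union_left

theorem subR [DecidableEq V] {X Y Z : Finset V} : Z ⊆ X ∪ Y ∪ Z :=
  Finset.subset_union_right

theorem subXY [DecidableEq V] {X Y Z : Finset V} : X ∪ Y ⊆ X ∪ Y ∪ Z :=
  Finset.subset_union_left

theorem subXZ [DecidableEq V] {X Y Z : Finset V} : X ∪ Z ⊆ X ∪ Y ∪ Z :=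
  Finset.union_subset subL subR

theorem unionSplit [DecidableEq V] {X Y Z : Finset V} :
    X ∪ Y ∪ Z ⊆ (X ∪ Y) ∪ (X ∪ Z) := by
  intro a ha
  simp only [Finset.mem_union] at ha ⊢
  tauto

theorem margin_ne_zero_of_mem {K : Type*} [CommSemiring K] [DecidableEq V]
    {Dom : V → Type*} [∀ a, Fintype (Dom a)] {X Y : Finset V}
    (hpos : plusPos K) (R : Tup Dom X → K) (h : Y ⊆ X) (t : Tup Dom X)
    (ht : R t ≠ 0) : margin R h (Tup.restrict h t) ≠ 0 := by
  classical
  intro hz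
  unfold margin at hz
  rw [← Finset.add_sum_erase _ _ (Finset.mem_univ t)] at hz
  have := (hpos _ _ hz).1
  simp only [if_pos rfl] at this
  exact ht this

theorem exists_of_margin_ne_zero {K : Type*} [CommSemiring K] [DecidableEq V]
    {Dom : V → Type*} [∀ a, Fintype (Dom a)] {X Y : Finset V}
    (R : Tup Dom X → K) (h : Y ⊆ X) (u : Tup Dom Y)
    (hm : margin R h u ≠ 0) : ∃ t, R t ≠ 0 ∧ Tup.restrict h t = u := by
  classical
  by_contra hc
  push_neg at hc
  apply hm
  unfold margin
  apply Finset.sum_eq_zero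
  intro t _
  by_cases he : Tup.restrict h t = u
  · rw [if_pos he]
    by_contra hRt
    exact (hc t hRt) he
  · rw [if_neg he]

/-- FD contraction is sound for `K`-relations over any nontrivial positive,
multiplicatively cancellative commutative semiring: `CI(X; Y, Z)` and
`X ∪ Y → Z` entail `X → Z`. -/
theorem fdContraction_sound
    [DecidableEq V] [Fintype V] {Dom : V → Type*}
    [∀ a, Fintype (Dom a)] [∀ a, Nonempty (Dom a)]
    {K : Type*} [CommSemiring K] [Nontrivial K]
    (hpos : posSemiring K) (hmc : mulCanc K)
    {X Y Z : Finset V}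
    (hXY : Disjoint X Y) (hXZ : Disjoint X Z) (hYZ : Disjoint Y Z)
    (R : Tup Dom (Finset.univ : Finset V) → K)
    (hci : satCI R (Finset.subset_univ X) (Finset.subset_univ Y) (Finset.subset_univ Z))
    (hfd : satFD R (Finset.subset_univ (X ∪ Y)) (Finset.subset_univ Z)) :
    satFD R (Finset.subset_univ X) (Finset.subset_univ Z) := by
  classical
  intro t t' ht ht' hXagree
  -- build the combined tuple s over X ∪ Y ∪ Z
  set s : Tup Dom (X ∪ Y ∪ Z) := fun a =>
    if a.1 ∈ X ∪ Y then t ⟨a.1, Finset.mem_univ _⟩ else t' ⟨a.1, Finset.mem_univ _⟩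
    with hs
  have hsXY : Tup.restrict (subXY (Z := Z)) s
      = Tup.restrict (Finset.subset_univ (X ∪ Y)) t := by
    funext a
    simp only [Tup.restrict, hs]
    rw [if_pos a.2]
  have hsX : Tup.restrict (subL (Y := Y) (Z := Z)) s
      = Tup.restrict (Finset.subset_univ X) t := by
    funext a
    simp only [Tup.restrict, hs]
    rw [if_pos (Finset.mem_union_left _ a.2)]
  have hsZ : Tup.restrict (subR (X := X) (Y := Y)) s
      = Tup.restrict (Finset.subset_univ Z) t' := by
    funext a
    simp only [Tup.restrict, hs]
    have haZ : a.1 ∈ Z := a.2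
    have : a.1 ∉ X ∪ Y := by
      simp only [Finset.mem_union]
      push_neg
      exact ⟨Finset.disjoint_right.mp hXZ haZ, Finset.disjoint_right.mp hYZ haZ⟩
    rw [if_neg this]
  have hsXZ : Tup.restrict (subXZ (Y := Y)) s
      = Tup.restrict (Finset.subset_univ (X ∪ Z)) t' := by
    funext a
    simp only [Tup.restrict, hs]
    rcases Finset.mem_union.mp a.2 with haX | haZ
    · rw [if_pos (Finset.mem_union_left _ haX)]
      exact congrFun hXagree ⟨a.1, haX⟩
    · have : a.1 ∉ X ∪ Y := by
        simp only [Finset.mem_union]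
        push_neg
        exact ⟨Finset.disjoint_right.mp hXZ haZ, Finset.disjoint_right.mp hYZ haZ⟩
      rw [if_neg this]
  have hciS := hci s
  rw [show Tup.restrict Finset.subset_union_left s
        = Tup.restrict (Finset.subset_univ (X ∪ Y)) t from hsXY,
      show Tup.restrict (Finset.union_subset
          (Finset.subset_union_left.trans Finset.subset_union_left)
          Finset.subset_union_right) s
        = Tup.restrict (Finset.subset_univ (X ∪ Z)) t' from hsXZ] at hciS
  have h1 : margin R (Finset.subset_univ (X ∪ Y))
      (Tup.restrict (Finset.subset_univ (X ∪ Y)) t) ≠ 0 :=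
    margin_ne_zero_of_mem hpos.1 R _ t ht
  have h2 : margin R (Finset.subset_univ (X ∪ Z))
      (Tup.restrict (Finset.subset_univ (X ∪ Z)) t') ≠ 0 :=
    margin_ne_zero_of_mem hpos.1 R _ t' ht'
  have hLHS : margin R (Finset.union_subset (Finset.union_subset
      (Finset.subset_univ X) (Finset.subset_univ Y)) (Finset.subset_univ Z)) s ≠ 0 := by
    intro hzero
    rw [hzero, zero_mul] at hciS
    rcases hpos.2 _ _ hciS with h | h
    · exact h1 h
    · exact h2 h
  obtain ⟨w, hw, hws⟩ := exists_of_margin_ne_zero R _ s hLHS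
  -- w agrees with t on X ∪ Y
  have hwXY : Tup.restrict (Finset.subset_univ (X ∪ Y)) w
      = Tup.restrict (Finset.subset_univ (X ∪ Y)) t := by
    have : Tup.restrict (subXY (Z := Z)) (Tup.restrict (Finset.union_subset
        (Finset.union_subset (Finset.subset_univ X) (Finset.subset_univ Y))
        (Finset.subset_univ Z)) w) = Tup.restrict (subXY (Z := Z)) s := by rw [hws]
    exact this.trans hsXY
  have hwZ : Tup.restrict (Finset.subset_univ Z) w
      = Tup.restrict (Finset.subset_univ Z) t' := by
    have : Tup.restrict (subR (X := X) (Y := Y)) (Tup.restrict (Finset.union_subset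
        (Finset.union_subset (Finset.subset_univ X) (Finset.subset_univ Y))
        (Finset.subset_univ Z)) w) = Tup.restrict (subR (X := X) (Y := Y)) s := by rw [hws]
    exact this.trans hsZ
  have := hfd w t hw ht hwXY
  rw [← this, hwZ]
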